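/- In the Weyl group W(A₃) ≅ S₄ with simple roots α₁, α₂, α₃, let Ψ = {±α₁, ±α₃} (type 2A₁) with J = {α₁, α₃} and Ψ' = {±(α₁+α₂)} (type A₁) with J' = {α₁+α₂}. Then N(Ψ) ∩ W(Ψ') = {e} and W(Ψ^⊥) ∩ W(Ψ'^⊥) = {e}, i.e. {J, J'} is a useful sub-system, and the set of Δ*-tabloids (cosets of N(Ψ) in W) has exactly 3 elements. -/

import Mathlib

open scoped Pointwise RealInnerProductSpace Classical

noncomputable section

variable {V : Type*} [NormedAddCommGroup V] [InnerProductSpace ℝ V]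

/-- The reflection `τ_α` in the hyperplane orthogonal to `α` (the identity if `α = 0`):
`τ_α v = v - 2 (⟪α, v⟫ / ⟪α, α⟫) • α`. -/
def tau (α : V) : V ≃ₗ[ℝ] V :=
  if hα : α = 0 then LinearEquiv.refl ℝ V
  else Module.reflection (f := (2 / ⟪α, α⟫) • (innerₛₗ ℝ α)) (x := α) (by
    have h : ⟪α, α⟫ ≠ 0 := inner_self_ne_zero.mpr hα
    simp only [LinearMap.smul_apply, innerₛₗ_apply_apply, smul_eq_mul]
    field_simp)

/-- The reflection group generated by the reflections `τ_α`, `α ∈ Φ`. -/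
def WeylGroup (Φ : Set V) : Subgroup (V ≃ₗ[ℝ] V) :=
  Subgroup.closure (tau '' Φ)

variable (Φ : Set V)

/-- The reflection subgroup `W(S)` of `W(Φ)` generated by reflections in elements of `S`. -/
def WeylSub (S : Set V) : Subgroup ↥(WeylGroup Φ) :=
  Subgroup.closure {w : ↥(WeylGroup Φ) | ∃ α ∈ S, (w : V ≃ₗ[ℝ] V) = tau α}

/-- `N(Ψ) = {w ∈ W | wΨ = Ψ}`, the setwise stabilizer of `Ψ` in the Weyl group. -/
def NSub (Ψ : Set V) : Subgroup ↥(WeylGroup Φ) :=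
  MulAction.stabilizer ↥(WeylGroup Φ) Ψ

/-- `Φ` is a (not necessarily crystallographic) root system. -/
def IsRootSystem : Prop :=
  Φ.Finite ∧ (∀ α ∈ Φ, α ≠ 0) ∧ (∀ α ∈ Φ, -α ∈ Φ) ∧
    (∀ α ∈ Φ, ∀ c : ℝ, c • α ∈ Φ → c = 1 ∨ c = -1) ∧
    ∀ α ∈ Φ, ∀ β ∈ Φ, tau α β ∈ Φ

/-- `Ψ` is a subsystem of `Φ`: a subset closed under its own reflections. -/
def IsSubsystem (Ψ : Set V) : Prop :=
  Ψ ⊆ Φ ∧ ∀ α ∈ Ψ, ∀ β ∈ Ψ, tau α β ∈ Ψ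

/-- `Φp` is a positive system in `Φ`. -/
def IsPositiveSystem (Φp : Set V) : Prop :=
  Φp ⊆ Φ ∧ ∀ α ∈ Φ, (α ∈ Φp ↔ ¬ (-α ∈ Φp))

/-- `J` is a simple system for the (sub)system `Ψ`: a linearly independent subset such that
every root of `Ψ` is a non-negative or non-positive combination of `J`. -/
def IsSimpleSystem (Ψ J : Set V) : Prop :=
  J ⊆ Ψ ∧ LinearIndependent ℝ ((↑) : J → V) ∧
    ∀ α ∈ Ψ, ∃ f : V →₀ ℝ, ↑f.support ⊆ J ∧
      ((∀ v, 0 ≤ f v) ∨ (∀ v, f v ≤ 0)) ∧ α = f.sum fun v c => c • v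

/-- `Ψ^⊥`: the largest subsystem of `Φ` orthogonal to `Ψ`. -/
def perp (Ψ : Set V) : Set V := {α ∈ Φ | ∀ β ∈ Ψ, ⟪α, β⟫ = 0}

/-- `{J, J'}` is a useful sub-system: `N(Ψ) ∩ W(Ψ') = 1` and `W(Ψ^⊥) ∩ W(Ψ'^⊥) = 1`. -/
def UsefulSubSystem (Ψ Ψ' : Set V) : Prop :=
  NSub Φ Ψ ⊓ WeylSub Φ Ψ' = ⊥ ∧ WeylSub Φ (perp Φ Ψ) ⊓ WeylSub Φ (perp Φ Ψ') = ⊥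

variable (K : Type*) [Field K]

/-- The set of Δ*-tabloids: left cosets of `N(Ψ)` in `W`. -/
abbrev Tab (Ψ : Set V) := ↥(WeylGroup Φ) ⧸ NSub Φ Ψ

/-- The permutation module `M^Ψ` with basis the Δ*-tabloids. -/
abbrev MPsi (Ψ : Set V) := Tab Φ Ψ →₀ K

/-- The action of `w ∈ W` on `M^Ψ`, permuting the tabloid basis. -/
def act {Ψ : Set V} (w : ↥(WeylGroup Φ)) (m : MPsi Φ K Ψ) : MPsi Φ K Ψ :=
  Finsupp.mapDomain (fun t => w • t) m

/-- The sign `s(w) = (-1)^{ℓ(w)} = det w`, viewed in the field `K`. -/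
def sgn (w : ↥(WeylGroup Φ)) : K :=
  if LinearMap.det ((w : V ≃ₗ[ℝ] V) : V →ₗ[ℝ] V) = 1 then 1 else -1

/-- `κ_{J'} = Σ_{σ ∈ W(Ψ')} s(σ) σ`, acting on `M^Ψ`. -/
def kappa (Ψ Ψ' : Set V) (m : MPsi Φ K Ψ) : MPsi Φ K Ψ :=
  ∑ᶠ σ ∈ (WeylSub Φ Ψ' : Set ↥(WeylGroup Φ)), sgn Φ K σ • act Φ K σ m

/-- The generalized Δ*-polytabloid `e_{J,J'} = κ_{J'} {J}`. -/
def polytabloid (Ψ Ψ' : Set V) : MPsi Φ K Ψ :=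
  kappa Φ K Ψ Ψ' (Finsupp.single (QuotientGroup.mk 1) 1)

/-- A good sub-system: a useful sub-system such that whenever `dΨ ∩ Ψ' = ∅`, the tabloid
`{dJ}` appears with non-zero coefficient in `e_{J,J'}`. -/
def GoodSubSystem (Ψ Ψ' : Set V) : Prop :=
  UsefulSubSystem Φ Ψ Ψ' ∧
    ∀ d : ↥(WeylGroup Φ), (d • Ψ) ∩ Ψ' = ∅ →
      polytabloid Φ K Ψ Ψ' (QuotientGroup.mk d) ≠ 0

/-- The submodule of the generalized Specht module: span of all `w·e_{J,J'}`. -/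
def SpechtSub (Ψ Ψ' : Set V) : Submodule K (MPsi Φ K Ψ) :=
  Submodule.span K (Set.range fun w : ↥(WeylGroup Φ) => act Φ K w (polytabloid Φ K Ψ Ψ'))

/-- The standard bilinear form on `M^Ψ` for which the tabloids are orthonormal. -/
def Bform (Ψ : Set V) : MPsi Φ K Ψ →ₗ[K] MPsi Φ K Ψ →ₗ[K] K :=
  Finsupp.lsum K fun t => LinearMap.toSpanSingleton K _ (Finsupp.lapply t)

/-- The orthogonal complement `S^{Ψ,Ψ'⊥}` of the Specht submodule in `M^Ψ`. -/
def SpechtPerp (Ψ Ψ' : Set V) : Submodule K (MPsi Φ K Ψ) :=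
  ⨅ y ∈ SpechtSub Φ K Ψ Ψ', LinearMap.ker ((Bform Φ K Ψ).flip y)

end

namespace A3Example

noncomputable section

abbrev V4 := EuclideanSpace ℝ (Fin 4)

/-- standard basis vectors -/
def e (i : Fin 4) : V4 := EuclideanSpace.single i 1

/-- the root system A₃: `{ε_i - ε_j | i ≠ j}` -/
def Phi : Set V4 := {x | ∃ i j : Fin 4, i ≠ j ∧ x = e i - e j}

def a1 : V4 := e 0 - e 1
def a2 : V4 := e 1 - e 2
def a3 : V4 := e 2 - e 3

/-- `Ψ = {±α₁, ±α₃}` of type 2A₁, with simple system `J = {α₁, α₃}` -/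
def Psi : Set V4 := {a1, -a1, a3, -a3}

/-- `Ψ' = {±(α₁+α₂)}` of type A₁, with simple system `J' = {α₁+α₂}` -/
def Psi' : Set V4 := {a1 + a2, -(a1 + a2)}


-- ==================== auxiliary lemmas ====================

lemma tau_apply' (α : V4) (hα : α ≠ 0) (v : V4) :
    tau α v = v - (2 / ⟪α, α⟫ * ⟪α, v⟫) • α := by
  rw [tau, dif_neg hα, Module.reflection_apply]
  simp

lemma tau_sq' (α : V4) : tau α * tau α = 1 := by
  by_cases hα : α = 0
  · subst hα; apply LinearEquiv.ext; intro v; rw [tau, dif_pos rfl]; rfl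
  · apply LinearEquiv.ext
    intro v
    have : ∀ w, tau α (tau α w) = w := by
      intro w
      rw [tau, dif_neg hα]
      exact Module.involutive_reflection _ w
    show tau α (tau α v) = v
    exact this v

lemma tau_neg' (α : V4) : tau (-α) = tau α := by
  by_cases hα : α = 0
  · simp [hα]
  · have h' : -α ≠ 0 := neg_ne_zero.mpr hα
    ext v
    rw [tau_apply' _ hα, tau_apply' _ h']
    simp [inner_neg_neg, inner_neg_left]

lemma zpow_invol {G : Type*} [Group G] {g : G} (h : g * g = 1) (n : ℤ) :
    g ^ n = 1 ∨ g ^ n = g := by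
  have h2 : g ^ (2 : ℤ) = 1 := by
    rw [show (2 : ℤ) = 1 + 1 by norm_num, zpow_add, zpow_one, h]
  have key : g ^ n = g ^ (n % 2) := by
    conv_lhs => rw [← Int.emod_add_mul_ediv n 2]
    rw [zpow_add, zpow_mul, h2, one_zpow, mul_one]
  rcases Int.emod_two_eq_zero_or_one n with he | he <;> rw [key, he] <;> simp

def Psi2 : Set V4 := {e 0 - e 2, e 2 - e 0, e 1 - e 3, e 3 - e 1}
def Psi3 : Set V4 := {e 0 - e 3, e 3 - e 0, e 2 - e 1, e 1 - e 2}
def T : Set (Set V4) := {Psi, Psi2, Psi3}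

lemma e_apply (i k : Fin 4) : e i k = if k = i then 1 else 0 := by
  simp [e, EuclideanSpace.single_apply]

lemma sub_apply (x y : V4) (k : Fin 4) : (x - y) k = x k - y k := rfl

lemma inner_e_left (i : Fin 4) (v : V4) : ⟪e i, v⟫ = v i := by
  simp [e, EuclideanSpace.inner_single_left]

lemma e_ne (i j : Fin 4) (h : i ≠ j) : e i - e j ≠ 0 := by
  intro hc
  have := congrArg (fun x : V4 => x i) hc
  simp [sub_apply, e_apply, h] at this

lemma inner_diff (i j : Fin 4) (v : V4) : ⟪e i - e j, v⟫ = v i - v j := by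
  rw [inner_sub_left, inner_e_left, inner_e_left]

lemma E_ne_E {a b c d : Fin 4} (k : Fin 4)
    (h : ((if k = a then (1:ℝ) else 0) - (if k = b then 1 else 0)) ≠
         ((if k = c then 1 else 0) - (if k = d then 1 else 0))) :
    e a - e b ≠ e c - e d := by
  intro he
  apply h
  have := congrArg (fun x : V4 => x k) he
  simpa [sub_apply, e_apply] using this

lemma tau_e (i j a : Fin 4) (hij : i ≠ j) :
    tau (e i - e j) (e a) = e (Equiv.swap i j a) := by
  rw [tau_apply' _ (e_ne i j hij)]
  rw [inner_diff, inner_diff]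
  simp only [sub_apply, e_apply]
  rcases eq_or_ne a i with rfl | hai
  · simp [hij, hij.symm, Equiv.swap_apply_left]
    ext k
    simp [sub_apply, e_apply]
    norm_num
  · rcases eq_or_ne a j with rfl | haj
    · simp [hij, hij.symm, Equiv.swap_apply_right, hai]
      ext k
      simp [sub_apply, e_apply]
      norm_num
    · simp [hai, haj, Ne.symm hai, Ne.symm haj, Equiv.swap_apply_of_ne_of_ne hai haj]

lemma tau_diff (i j a b : Fin 4) (hij : i ≠ j) :
    tau (e i - e j) (e a - e b) = e (Equiv.swap i j a) - e (Equiv.swap i j b) := by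
  rw [map_sub, tau_e _ _ _ hij, tau_e _ _ _ hij]

lemma Psi_eq : Psi = {e 0 - e 1, e 1 - e 0, e 2 - e 3, e 3 - e 2} := by
  simp only [Psi, a1, a3, neg_sub]

lemma smul_set_eq_image (g : V4 ≃ₗ[ℝ] V4) (S : Set V4) : g • S = g '' S := by
  ext x
  simp [Set.mem_smul_set]

set_option maxHeartbeats 4000000 in
lemma stabT (i j : Fin 4) (hij : i ≠ j) (S : Set V4) (hS : S ∈ T) :
    tau (e i - e j) '' S ∈ T := by
  have hmem : ∀ a b c d : Fin 4,
      tau (e i - e j) '' {e a - e b, e b - e a, e c - e d, e d - e c} =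
      {e (Equiv.swap i j a) - e (Equiv.swap i j b), e (Equiv.swap i j b) - e (Equiv.swap i j a),
       e (Equiv.swap i j c) - e (Equiv.swap i j d), e (Equiv.swap i j d) - e (Equiv.swap i j c)} := by
    intro a b c d
    simp only [Set.image_insert_eq, Set.image_singleton, tau_diff _ _ _ _ hij]
  rcases hS with rfl | rfl | rfl
  · rw [Psi_eq, hmem]
    fin_cases i <;> fin_cases j <;>
      first
        | exact absurd rfl hij
        | (simp only [Equiv.swap_apply_def]
           norm_num
           simp only [T, Set.mem_insert_iff, Set.mem_singleton_iff]
           first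
             | (left; ext v; simp only [Psi_eq, Set.mem_insert_iff, Set.mem_singleton_iff]; tauto)
             | (right; left; ext v; simp only [Psi2, Set.mem_insert_iff, Set.mem_singleton_iff]; tauto)
             | (right; right; ext v; simp only [Psi3, Set.mem_insert_iff, Set.mem_singleton_iff]; tauto))
  · rw [show Psi2 = {e 0 - e 2, e 2 - e 0, e 1 - e 3, e 3 - e 1} from rfl, hmem]
    fin_cases i <;> fin_cases j <;>
      first
        | exact absurd rfl hij
        | (simp only [Equiv.swap_apply_def]
           norm_num
           simp only [T, Set.mem_insert_iff, Set.mem_singleton_iff]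
           first
             | (left; ext v; simp only [Psi_eq, Set.mem_insert_iff, Set.mem_singleton_iff]; tauto)
             | (right; left; ext v; simp only [Psi2, Set.mem_insert_iff, Set.mem_singleton_iff]; tauto)
             | (right; right; ext v; simp only [Psi3, Set.mem_insert_iff, Set.mem_singleton_iff]; tauto))
  · rw [show Psi3 = {e 0 - e 3, e 3 - e 0, e 2 - e 1, e 1 - e 2} from rfl, hmem]
    fin_cases i <;> fin_cases j <;>
      first
        | exact absurd rfl hij
        | (simp only [Equiv.swap_apply_def]
           norm_num
           simp only [T, Set.mem_insert_iff, Set.mem_singleton_iff]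
           first
             | (left; ext v; simp only [Psi_eq, Set.mem_insert_iff, Set.mem_singleton_iff]; tauto)
             | (right; left; ext v; simp only [Psi2, Set.mem_insert_iff, Set.mem_singleton_iff]; tauto)
             | (right; right; ext v; simp only [Psi3, Set.mem_insert_iff, Set.mem_singleton_iff]; tauto))

lemma weylT {g : V4 ≃ₗ[ℝ] V4} (hg : g ∈ WeylGroup Phi) :
    (∀ S ∈ T, g • S ∈ T) ∧ (∀ S ∈ T, g⁻¹ • S ∈ T) := by
  induction hg using Subgroup.closure_induction with
  | mem x hx =>
      obtain ⟨α, hα, rfl⟩ := hx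
      obtain ⟨i, j, hij, rfl⟩ := hα
      have hinv : (tau (e i - e j))⁻¹ = tau (e i - e j) :=
        inv_eq_of_mul_eq_one_right (tau_sq' _)
      have h1 : ∀ S ∈ T, tau (e i - e j) • S ∈ T := by
        intro S hS
        rw [smul_set_eq_image]
        exact stabT i j hij S hS
      exact ⟨h1, by rw [hinv]; exact h1⟩
  | one => simpa using fun S hS => hS
  | mul x y hx hy ihx ihy =>
      refine ⟨fun S hS => ?_, fun S hS => ?_⟩
      · rw [mul_smul]; exact ihx.1 _ (ihy.1 S hS)
      · rw [mul_inv_rev, mul_smul]; exact ihy.2 _ (ihx.2 S hS)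
  | inv x hx ih => exact ⟨ih.2, by simpa [inv_inv] using ih.1⟩

lemma Psi_mem_T : Psi ∈ T := Or.inl rfl

lemma orbit_eq : MulAction.orbit ↥(WeylGroup Phi) Psi = T := by
  apply Set.Subset.antisymm
  · rintro S ⟨w, rfl⟩
    exact (weylT w.2).1 Psi Psi_mem_T
  · rintro S (rfl | rfl | rfl)
    · exact MulAction.mem_orbit_self _
    · have hmem : tau (e 1 - e 2) ∈ WeylGroup Phi :=
        Subgroup.subset_closure ⟨e 1 - e 2, ⟨1, 2, by decide, rfl⟩, rfl⟩
      refine ⟨⟨tau (e 1 - e 2), hmem⟩, ?_⟩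
      show tau (e 1 - e 2) • Psi = Psi2
      have key := fun a b => tau_diff 1 2 a b (by decide)
      rw [smul_set_eq_image, Psi_eq]
      simp only [Set.image_insert_eq, Set.image_singleton, key]
      norm_num [Equiv.swap_apply_def]
      rfl
    · have hmem : tau (e 1 - e 3) ∈ WeylGroup Phi :=
        Subgroup.subset_closure ⟨e 1 - e 3, ⟨1, 3, by decide, rfl⟩, rfl⟩
      refine ⟨⟨tau (e 1 - e 3), hmem⟩, ?_⟩
      show tau (e 1 - e 3) • Psi = Psi3
      have key := fun a b => tau_diff 1 3 a b (by decide)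
      rw [smul_set_eq_image, Psi_eq]
      simp only [Set.image_insert_eq, Set.image_singleton, key]
      norm_num [Equiv.swap_apply_def]
      rfl

lemma Psi_ne_Psi2 : Psi ≠ Psi2 := by
  intro h
  have hm : e 0 - e 1 ∈ Psi2 := by rw [← h, Psi_eq]; left; rfl
  simp only [Psi2, Set.mem_insert_iff, Set.mem_singleton_iff] at hm
  rcases hm with h' | h' | h' | h'
  · exact E_ne_E 2 (by norm_num [show ((2:Fin 4)=1)=False from by decide, show ((0:Fin 4)=2)=False from by decide, show ((0:Fin 4)=3)=False from by decide, show ((1:Fin 4)=3)=False from by decide, show ((2:Fin 4)=3)=False from by decide, show ((2:Fin 4)=0)=False from by decide, show ((1:Fin 4)=2)=False from by decide, show ((2:Fin 4)=1)=False from by decide, show ((1:Fin 4)=0)=False from by decide, show ((3:Fin 4)=2)=False from by decide, show ((3:Fin 4)=1)=False from by decide, show ((3:Fin 4)=0)=False from by decide, show ((0:Fin 4)=1)=False from by decide]) h'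
  · exact E_ne_E 0 (by norm_num [show ((2:Fin 4)=1)=False from by decide, show ((0:Fin 4)=2)=False from by decide, show ((0:Fin 4)=3)=False from by decide, show ((1:Fin 4)=3)=False from by decide, show ((2:Fin 4)=3)=False from by decide, show ((2:Fin 4)=0)=False from by decide, show ((1:Fin 4)=2)=False from by decide, show ((2:Fin 4)=1)=False from by decide, show ((1:Fin 4)=0)=False from by decide, show ((3:Fin 4)=2)=False from by decide, show ((3:Fin 4)=1)=False from by decide, show ((3:Fin 4)=0)=False from by decide, show ((0:Fin 4)=1)=False from by decide]) h'
  · exact E_ne_E 0 (by norm_num [show ((2:Fin 4)=1)=False from by decide, show ((0:Fin 4)=2)=False from by decide, show ((0:Fin 4)=3)=False from by decide, show ((1:Fin 4)=3)=False from by decide, show ((2:Fin 4)=3)=False from by decide, show ((2:Fin 4)=0)=False from by decide, show ((1:Fin 4)=2)=False from by decide, show ((2:Fin 4)=1)=False from by decide, show ((1:Fin 4)=0)=False from by decide, show ((3:Fin 4)=2)=False from by decide, show ((3:Fin 4)=1)=False from by decide, show ((3:Fin 4)=0)=False from by decide, show ((0:Fin 4)=1)=False from by decide]) h'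
  · exact E_ne_E 0 (by norm_num [show ((2:Fin 4)=1)=False from by decide, show ((0:Fin 4)=2)=False from by decide, show ((0:Fin 4)=3)=False from by decide, show ((1:Fin 4)=3)=False from by decide, show ((2:Fin 4)=3)=False from by decide, show ((2:Fin 4)=0)=False from by decide, show ((1:Fin 4)=2)=False from by decide, show ((2:Fin 4)=1)=False from by decide, show ((1:Fin 4)=0)=False from by decide, show ((3:Fin 4)=2)=False from by decide, show ((3:Fin 4)=1)=False from by decide, show ((3:Fin 4)=0)=False from by decide, show ((0:Fin 4)=1)=False from by decide]) h'

lemma Psi_ne_Psi3 : Psi ≠ Psi3 := by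
  intro h
  have hm : e 0 - e 1 ∈ Psi3 := by rw [← h, Psi_eq]; left; rfl
  simp only [Psi3, Set.mem_insert_iff, Set.mem_singleton_iff] at hm
  rcases hm with h' | h' | h' | h'
  · exact E_ne_E 1 (by norm_num [show ((2:Fin 4)=1)=False from by decide, show ((0:Fin 4)=2)=False from by decide, show ((0:Fin 4)=3)=False from by decide, show ((1:Fin 4)=3)=False from by decide, show ((2:Fin 4)=3)=False from by decide, show ((2:Fin 4)=0)=False from by decide, show ((1:Fin 4)=2)=False from by decide, show ((2:Fin 4)=1)=False from by decide, show ((1:Fin 4)=0)=False from by decide, show ((3:Fin 4)=2)=False from by decide, show ((3:Fin 4)=1)=False from by decide, show ((3:Fin 4)=0)=False from by decide, show ((0:Fin 4)=1)=False from by decide]) h'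
  · exact E_ne_E 0 (by norm_num [show ((2:Fin 4)=1)=False from by decide, show ((0:Fin 4)=2)=False from by decide, show ((0:Fin 4)=3)=False from by decide, show ((1:Fin 4)=3)=False from by decide, show ((2:Fin 4)=3)=False from by decide, show ((2:Fin 4)=0)=False from by decide, show ((1:Fin 4)=2)=False from by decide, show ((2:Fin 4)=1)=False from by decide, show ((1:Fin 4)=0)=False from by decide, show ((3:Fin 4)=2)=False from by decide, show ((3:Fin 4)=1)=False from by decide, show ((3:Fin 4)=0)=False from by decide, show ((0:Fin 4)=1)=False from by decide]) h'
  · exact E_ne_E 0 (by norm_num [show ((2:Fin 4)=1)=False from by decide, show ((0:Fin 4)=2)=False from by decide, show ((0:Fin 4)=3)=False from by decide, show ((1:Fin 4)=3)=False from by decide, show ((2:Fin 4)=3)=False from by decide, show ((2:Fin 4)=0)=False from by decide, show ((1:Fin 4)=2)=False from by decide, show ((2:Fin 4)=1)=False from by decide, show ((1:Fin 4)=0)=False from by decide, show ((3:Fin 4)=2)=False from by decide, show ((3:Fin 4)=1)=False from by decide, show ((3:Fin 4)=0)=False from by decide, show ((0:Fin 4)=1)=False from by decide]) h'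
  · exact E_ne_E 0 (by norm_num [show ((2:Fin 4)=1)=False from by decide, show ((0:Fin 4)=2)=False from by decide, show ((0:Fin 4)=3)=False from by decide, show ((1:Fin 4)=3)=False from by decide, show ((2:Fin 4)=3)=False from by decide, show ((2:Fin 4)=0)=False from by decide, show ((1:Fin 4)=2)=False from by decide, show ((2:Fin 4)=1)=False from by decide, show ((1:Fin 4)=0)=False from by decide, show ((3:Fin 4)=2)=False from by decide, show ((3:Fin 4)=1)=False from by decide, show ((3:Fin 4)=0)=False from by decide, show ((0:Fin 4)=1)=False from by decide]) h'

lemma Psi2_ne_Psi3 : Psi2 ≠ Psi3 := by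
  intro h
  have hm : e 0 - e 2 ∈ Psi3 := by rw [← h]; left; rfl
  simp only [Psi3, Set.mem_insert_iff, Set.mem_singleton_iff] at hm
  rcases hm with h' | h' | h' | h'
  · exact E_ne_E 2 (by norm_num [show ((2:Fin 4)=1)=False from by decide, show ((0:Fin 4)=2)=False from by decide, show ((0:Fin 4)=3)=False from by decide, show ((1:Fin 4)=3)=False from by decide, show ((2:Fin 4)=3)=False from by decide, show ((2:Fin 4)=0)=False from by decide, show ((1:Fin 4)=2)=False from by decide, show ((2:Fin 4)=1)=False from by decide, show ((1:Fin 4)=0)=False from by decide, show ((3:Fin 4)=2)=False from by decide, show ((3:Fin 4)=1)=False from by decide, show ((3:Fin 4)=0)=False from by decide, show ((0:Fin 4)=1)=False from by decide]) h'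
  · exact E_ne_E 0 (by norm_num [show ((2:Fin 4)=1)=False from by decide, show ((0:Fin 4)=2)=False from by decide, show ((0:Fin 4)=3)=False from by decide, show ((1:Fin 4)=3)=False from by decide, show ((2:Fin 4)=3)=False from by decide, show ((2:Fin 4)=0)=False from by decide, show ((1:Fin 4)=2)=False from by decide, show ((2:Fin 4)=1)=False from by decide, show ((1:Fin 4)=0)=False from by decide, show ((3:Fin 4)=2)=False from by decide, show ((3:Fin 4)=1)=False from by decide, show ((3:Fin 4)=0)=False from by decide, show ((0:Fin 4)=1)=False from by decide]) h'
  · exact E_ne_E 0 (by norm_num [show ((2:Fin 4)=1)=False from by decide, show ((0:Fin 4)=2)=False from by decide, show ((0:Fin 4)=3)=False from by decide, show ((1:Fin 4)=3)=False from by decide, show ((2:Fin 4)=3)=False from by decide, show ((2:Fin 4)=0)=False from by decide, show ((1:Fin 4)=2)=False from by decide, show ((2:Fin 4)=1)=False from by decide, show ((1:Fin 4)=0)=False from by decide, show ((3:Fin 4)=2)=False from by decide, show ((3:Fin 4)=1)=False from by decide, show ((3:Fin 4)=0)=False from by decide, show ((0:Fin 4)=1)=False from by decide]) h'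
  · exact E_ne_E 0 (by norm_num [show ((2:Fin 4)=1)=False from by decide, show ((0:Fin 4)=2)=False from by decide, show ((0:Fin 4)=3)=False from by decide, show ((1:Fin 4)=3)=False from by decide, show ((2:Fin 4)=3)=False from by decide, show ((2:Fin 4)=0)=False from by decide, show ((1:Fin 4)=2)=False from by decide, show ((2:Fin 4)=1)=False from by decide, show ((1:Fin 4)=0)=False from by decide, show ((3:Fin 4)=2)=False from by decide, show ((3:Fin 4)=1)=False from by decide, show ((3:Fin 4)=0)=False from by decide, show ((0:Fin 4)=1)=False from by decide]) h'

lemma card_tab : Nat.card (Tab Phi Psi) = 3 := by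
  have h1 : Nat.card (Tab Phi Psi) = Nat.card (MulAction.orbit ↥(WeylGroup Phi) Psi) :=
    (Nat.card_congr (MulAction.orbitEquivQuotientStabilizer ↥(WeylGroup Phi) Psi)).symm
  rw [h1, orbit_eq, Nat.card_coe_set_eq]
  exact Set.ncard_eq_three.mpr ⟨Psi, Psi2, Psi3, Psi_ne_Psi2, Psi_ne_Psi3, Psi2_ne_Psi3, rfl⟩

lemma a12_eq : a1 + a2 = e 0 - e 2 := by
  rw [a1, a2, sub_add_sub_cancel]

lemma s'_mem : tau (e 0 - e 2) ∈ WeylGroup Phi :=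
  Subgroup.subset_closure ⟨e 0 - e 2, ⟨0, 2, by decide, rfl⟩, rfl⟩

def s' : ↥(WeylGroup Phi) := ⟨tau (e 0 - e 2), s'_mem⟩

lemma gen_set_eq :
    {w : ↥(WeylGroup Phi) | ∃ α ∈ Psi', (w : V4 ≃ₗ[ℝ] V4) = tau α} = {s'} := by
  ext w
  simp only [Set.mem_setOf_eq, Set.mem_singleton_iff, Psi', Set.mem_insert_iff,
    Set.mem_singleton_iff]
  constructor
  · rintro ⟨α, (rfl | rfl), hw⟩
    · exact Subtype.ext (by rw [hw, a12_eq]; rfl)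
    · exact Subtype.ext (by rw [hw, tau_neg', a12_eq]; rfl)
  · rintro rfl
    exact ⟨a1 + a2, Or.inl rfl, by rw [a12_eq]; rfl⟩

lemma s'_sq : s' * s' = 1 := Subtype.ext (tau_sq' _)

lemma s'_not_mem_N : s' ∉ NSub Phi Psi := by
  intro hs
  have hst : s' • Psi = Psi := hs
  have hmem : tau (e 0 - e 2) (e 0 - e 1) ∈ (tau (e 0 - e 2) : V4 ≃ₗ[ℝ] V4) • Psi := by
    rw [smul_set_eq_image]
    exact ⟨e 0 - e 1, by rw [Psi_eq]; left; rfl, rfl⟩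
  have hcoe : s' • Psi = (tau (e 0 - e 2) : V4 ≃ₗ[ℝ] V4) • Psi := rfl
  rw [← hcoe, hst] at hmem
  have heq : tau (e 0 - e 2) (e 0 - e 1) = e 2 - e 1 := by
    rw [tau_diff 0 2 0 1 (by decide), show Equiv.swap (0:Fin 4) 2 0 = 2 from by decide,
      show Equiv.swap (0:Fin 4) 2 1 = 1 from by decide]
  rw [heq, Psi_eq] at hmem
  simp only [Set.mem_insert_iff, Set.mem_singleton_iff] at hmem
  rcases hmem with h' | h' | h' | h'
  · exact E_ne_E 2 (by norm_num [show ((2:Fin 4)=1)=False from by decide, show ((0:Fin 4)=2)=False from by decide, show ((0:Fin 4)=3)=False from by decide, show ((1:Fin 4)=3)=False from by decide, show ((2:Fin 4)=3)=False from by decide, show ((2:Fin 4)=0)=False from by decide, show ((1:Fin 4)=2)=False from by decide, show ((2:Fin 4)=1)=False from by decide, show ((1:Fin 4)=0)=False from by decide, show ((3:Fin 4)=2)=False from by decide, show ((3:Fin 4)=1)=False from by decide, show ((3:Fin 4)=0)=False from by decide, show ((0:Fin 4)=1)=False from by decide]) h'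
  · exact E_ne_E 2 (by norm_num [show ((2:Fin 4)=1)=False from by decide, show ((0:Fin 4)=2)=False from by decide, show ((0:Fin 4)=3)=False from by decide, show ((1:Fin 4)=3)=False from by decide, show ((2:Fin 4)=3)=False from by decide, show ((2:Fin 4)=0)=False from by decide, show ((1:Fin 4)=2)=False from by decide, show ((2:Fin 4)=1)=False from by decide, show ((1:Fin 4)=0)=False from by decide, show ((3:Fin 4)=2)=False from by decide, show ((3:Fin 4)=1)=False from by decide, show ((3:Fin 4)=0)=False from by decide, show ((0:Fin 4)=1)=False from by decide]) h'
  · exact E_ne_E 1 (by norm_num [show ((2:Fin 4)=1)=False from by decide, show ((0:Fin 4)=2)=False from by decide, show ((0:Fin 4)=3)=False from by decide, show ((1:Fin 4)=3)=False from by decide, show ((2:Fin 4)=3)=False from by decide, show ((2:Fin 4)=0)=False from by decide, show ((1:Fin 4)=2)=False from by decide, show ((2:Fin 4)=1)=False from by decide, show ((1:Fin 4)=0)=False from by decide, show ((3:Fin 4)=2)=False from by decide, show ((3:Fin 4)=1)=False from by decide, show ((3:Fin 4)=0)=False from by decide, show ((0:Fin 4)=1)=False from by decide]) h'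
  · exact E_ne_E 2 (by norm_num [show ((2:Fin 4)=1)=False from by decide, show ((0:Fin 4)=2)=False from by decide, show ((0:Fin 4)=3)=False from by decide, show ((1:Fin 4)=3)=False from by decide, show ((2:Fin 4)=3)=False from by decide, show ((2:Fin 4)=0)=False from by decide, show ((1:Fin 4)=2)=False from by decide, show ((2:Fin 4)=1)=False from by decide, show ((1:Fin 4)=0)=False from by decide, show ((3:Fin 4)=2)=False from by decide, show ((3:Fin 4)=1)=False from by decide, show ((3:Fin 4)=0)=False from by decide, show ((0:Fin 4)=1)=False from by decide]) h'

lemma part1 : NSub Phi Psi ⊓ WeylSub Phi Psi' = ⊥ := by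
  rw [eq_bot_iff]
  intro x hx
  obtain ⟨hxN, hxW⟩ := Subgroup.mem_inf.mp hx
  rw [WeylSub, gen_set_eq, Subgroup.mem_closure_singleton] at hxW
  obtain ⟨n, rfl⟩ := hxW
  rcases zpow_invol s'_sq n with h | h
  · simp [h]
  · rw [h] at hxN
    exact absurd hxN s'_not_mem_N

lemma perp_Psi : perp Phi Psi = ∅ := by
  ext α
  simp only [perp, Set.mem_setOf_eq, Set.mem_empty_iff_false, iff_false, not_and]
  rintro ⟨i, j, hij, rfl⟩ h
  have h1 := h a1 (by rw [Psi_eq]; left; rfl)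
  have h3 := h a3 (by rw [Psi_eq]; right; right; left; rfl)
  rw [inner_diff] at h1 h3
  rw [a1] at h1
  rw [a3] at h3
  simp only [sub_apply, e_apply] at h1 h3
  fin_cases i <;> fin_cases j <;> simp_all <;> linarith

lemma part2 : WeylSub Phi (perp Phi Psi) ⊓ WeylSub Phi (perp Phi Psi') = ⊥ := by
  have h : WeylSub Phi (perp Phi Psi) = ⊥ := by
    rw [WeylSub, perp_Psi]
    have : {w : ↥(WeylGroup Phi) | ∃ α ∈ (∅ : Set V4), (w : V4 ≃ₗ[ℝ] V4) = tau α} = ∅ := by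
      simp
    rw [this, Subgroup.closure_empty]
  rw [h, bot_inf_eq]


/-- `{J, J'}` is a useful sub-system in A₃ and there are exactly 3 Δ*-tabloids. -/
theorem statement16 :
    NSub Phi Psi ⊓ WeylSub Phi Psi' = ⊥ ∧
    WeylSub Phi (perp Phi Psi) ⊓ WeylSub Phi (perp Phi Psi') = ⊥ ∧
    UsefulSubSystem Phi Psi Psi' ∧
    Nat.card (Tab Phi Psi) = 3 :=
  ⟨part1, part2, ⟨part1, part2⟩, card_tab⟩

end

end A3Example
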